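/- Let s and t be self-adjoint operators on a complex Hilbert space H such that the pair (s,t) weakly anticommutes: for all λ ∈ ℝ∖{0}, (1) there is a core X for t with (s ± λi)^{-1}X ⊆ Dom t; (2) t(s ± λi)^{-1}X ⊆ Dom s; (3) the operator x ↦ (st + ts)(s ± λi)^{-1}x is bounded on X. Then for every λ ∈ ℝ∖{0}: (a) (s ± λi)^{-1} maps Dom t into Dom t; (b) s maps (s − λi)^{-1}(Dom t) into Dom t and t maps (s − λi)^{-1}(Dom t) into Dom s, so the anticommutator st + ts is defined on (s − λi)^{-1}(Dom t); (c) the operator x ↦ (st + ts)(s ± λi)^{-1}x is bounded on all of Dom t, and for every x ∈ Dom t one has t(s ± λi)^{-1}x + (s ∓ λi)^{-1}tx = (s ∓ λi)^{-1}(st + ts)(s ± λi)^{-1}x. -/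

import Mathlib

set_option synthInstance.maxHeartbeats 1000000
set_option maxHeartbeats 1000000

open Filter Topology
open scoped Classical

/-- Application of a partially defined operator, with junk value `0` off the domain. -/
noncomputable def pApply {H : Type*} [NormedAddCommGroup H] [InnerProductSpace ℂ H]
    (D : H →ₗ.[ℂ] H) (x : H) : H :=
  if hm : x ∈ D.domain then D ⟨x, hm⟩ else 0

section Aux
variable {H : Type*} [NormedAddCommGroup H] [InnerProductSpace ℂ H]

lemma pApply_eq (D : H →ₗ.[ℂ] H) {x : H} (h : x ∈ D.domain) :
    pApply D x = D ⟨x, h⟩ := dif_pos h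

lemma pApply_sub (D : H →ₗ.[ℂ] H) {a b : H} (ha : a ∈ D.domain) (hb : b ∈ D.domain) :
    pApply D (a - b) = pApply D a - pApply D b := by
  rw [pApply_eq D (sub_mem ha hb), pApply_eq D ha, pApply_eq D hb]
  exact D.map_sub ⟨a, ha⟩ ⟨b, hb⟩

lemma pApply_smul (D : H →ₗ.[ℂ] H) (c : ℂ) {a : H} (ha : a ∈ D.domain) :
    pApply D (c • a) = c • pApply D a := by
  rw [pApply_eq D (Submodule.smul_mem _ c ha), pApply_eq D ha]
  exact D.map_smul c ⟨a, ha⟩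

lemma symm_of_sa [CompleteSpace H] {t : H →ₗ.[ℂ] H} (ht : t.adjoint = t)
    {a b : H} (ha : a ∈ t.domain) (hb : b ∈ t.domain) :
    (inner ℂ (pApply t a) b : ℂ) = inner ℂ a (pApply t b) := by
  have hsa : IsSelfAdjoint t := ht
  have hd := hsa.dense_domain
  have hfa := LinearPMap.adjoint_isFormalAdjoint hd
  rw [ht] at hfa
  have := hfa ⟨a, ha⟩ ⟨b, hb⟩
  rwa [pApply_eq t ha, pApply_eq t hb]

lemma closed_of_sa [CompleteSpace H] {t : H →ₗ.[ℂ] H} (ht : t.adjoint = t)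
    {u : ℕ → H} {x y : H} (hu : ∀ n, u n ∈ t.domain)
    (hx : Tendsto u atTop (𝓝 x)) (hy : Tendsto (fun n => pApply t (u n)) atTop (𝓝 y)) :
    x ∈ t.domain ∧ pApply t x = y := by
  have hsa : IsSelfAdjoint t := ht
  have hd := hsa.dense_domain
  have key : ∀ b ∈ t.domain, (inner ℂ y b : ℂ) = inner ℂ x (pApply t b) := by
    intro b hb
    have h1 : Tendsto (fun n => (inner ℂ (pApply t (u n)) b : ℂ)) atTop (𝓝 (inner ℂ y b)) :=
      hy.inner tendsto_const_nhds
    have h3 : Tendsto (fun n => (inner ℂ (u n) (pApply t b) : ℂ)) atTop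
        (𝓝 (inner ℂ x (pApply t b))) := hx.inner tendsto_const_nhds
    have h2 : ∀ n, (inner ℂ (pApply t (u n)) b : ℂ) = inner ℂ (u n) (pApply t b) :=
      fun n => symm_of_sa ht (hu n) hb
    simp only [h2] at h1
    exact tendsto_nhds_unique h1 h3
  have hmem : x ∈ t.adjoint.domain :=
    LinearPMap.mem_adjoint_domain_of_exists x
      ⟨y, fun v => by rw [← pApply_eq t v.2]; exact key v v.2⟩
  have hval : t.adjoint ⟨x, hmem⟩ = y :=
    LinearPMap.adjoint_apply_eq hd ⟨x, hmem⟩ (fun v => by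
      rw [← pApply_eq t v.2]; exact key v v.2)
  constructor
  · rw [← ht]; exact hmem
  · rw [← ht, pApply_eq t.adjoint hmem]; exact hval

end Aux

/-- `R` is the family of resolvents of the (self-adjoint) operator `s` :
for each `l ≠ 0`, `R l` is the bounded, everywhere defined, inverse of `s + l·i`,
of norm at most `1/|l|`. -/
def IsResolventOf {H : Type*} [NormedAddCommGroup H] [InnerProductSpace ℂ H]
    (s : H →ₗ.[ℂ] H) (R : ℝ → H →L[ℂ] H) : Prop :=
  ∀ l : ℝ, l ≠ 0 →
    (∀ h : H, R l h ∈ s.domain) ∧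
    (∀ h : H, pApply s (R l h) + ((l : ℂ) * Complex.I) • R l h = h) ∧
    (∀ x ∈ s.domain, R l (pApply s x + ((l : ℂ) * Complex.I) • x) = x) ∧
    ‖R l‖ ≤ 1 / |l|

lemma res_sApply {H : Type*} [NormedAddCommGroup H] [InnerProductSpace ℂ H]
    {s : H →ₗ.[ℂ] H} {Rs : ℝ → H →L[ℂ] H} (hRs : IsResolventOf s Rs)
    {l : ℝ} (hl : l ≠ 0) (h : H) :
    pApply s (Rs l h) = h - ((l : ℂ) * Complex.I) • Rs l h :=
  eq_sub_of_add_eq ((hRs l hl).2.1 h)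

/-- Let `s` and `t` be self-adjoint operators on a complex Hilbert
space `H` such that the pair `(s,t)` weakly anticommutes (with core `X` for `t`).  Then
for every `λ ≠ 0`:
(a) `(s ± λi)⁻¹` maps `Dom t` into `Dom t`;
(b) `s` maps `(s − λi)⁻¹(Dom t)` into `Dom t` and `t` maps `(s − λi)⁻¹(Dom t)` into
    `Dom s`, so `st + ts` is defined on `(s − λi)⁻¹(Dom t)`;
(c) `(st + ts)(s ± λi)⁻¹` is bounded on all of `Dom t`, and for every `x ∈ Dom t`,
    `t(s ± λi)⁻¹x + (s ∓ λi)⁻¹tx = (s ∓ λi)⁻¹(st + ts)(s ± λi)⁻¹x`. -/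
theorem statement18
    {H : Type*} [NormedAddCommGroup H] [InnerProductSpace ℂ H] [CompleteSpace H]
    (s t : H →ₗ.[ℂ] H)
    -- s, t self-adjoint
    (hs : s.adjoint = s) (ht : t.adjoint = t)
    -- the resolvents (s + λi)⁻¹ and (t + λi)⁻¹
    (Rs Rt : ℝ → H →L[ℂ] H)
    (hRs : IsResolventOf s Rs) (hRt : IsResolventOf t Rt)
    -- X is a core for t
    (X : Submodule ℂ H) (hXt : X ≤ t.domain)
    (hXcore : ∀ y ∈ t.domain, ∀ ε > (0 : ℝ), ∃ x ∈ X,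
      ‖x - y‖ + ‖pApply t x - pApply t y‖ < ε)
    -- (1) (s ± λi)⁻¹ X ⊆ Dom t
    (h1 : ∀ l : ℝ, l ≠ 0 → ∀ x ∈ X, Rs l x ∈ t.domain)
    -- (2) t (s ± λi)⁻¹ X ⊆ Dom s
    (h2 : ∀ l : ℝ, l ≠ 0 → ∀ x ∈ X, pApply t (Rs l x) ∈ s.domain)
    -- (3) (st + ts)(s ± λi)⁻¹ is bounded on X
    (h3 : ∀ l : ℝ, l ≠ 0 → ∃ C : ℝ, ∀ x ∈ X,
      ‖pApply s (pApply t (Rs l x)) + pApply t (pApply s (Rs l x))‖ ≤ C * ‖x‖) :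
    ∀ l : ℝ, l ≠ 0 →
      -- (a) (s + λi)⁻¹ maps Dom t into Dom t
      (∀ x ∈ t.domain, Rs l x ∈ t.domain) ∧
      -- (b) s maps (s + λi)⁻¹(Dom t) into Dom t, t maps (s + λi)⁻¹(Dom t) into Dom s
      (∀ x ∈ t.domain, pApply s (Rs l x) ∈ t.domain ∧ pApply t (Rs l x) ∈ s.domain) ∧
      -- (c) boundedness of (st + ts)(s + λi)⁻¹ on all of Dom t …
      (∃ C : ℝ, ∀ x ∈ t.domain,
        ‖pApply s (pApply t (Rs l x)) + pApply t (pApply s (Rs l x))‖ ≤ C * ‖x‖) ∧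
      -- … and the commutator identity on Dom t
      (∀ x ∈ t.domain,
        pApply t (Rs l x) + Rs (-l) (pApply t x) =
          Rs (-l) (pApply s (pApply t (Rs l x)) + pApply t (pApply s (Rs l x)))) := by
  intro l hl
  have hl' : (-l : ℝ) ≠ 0 := neg_ne_zero.mpr hl
  set c : ℂ := (l : ℂ) * Complex.I with hc
  have hcneg : (((-l : ℝ) : ℂ) * Complex.I) = -c := by push_cast [hc]; ring
  -- abbreviation for the anticommutator applied to Rs l z
  set B : H → H := fun z =>
    pApply s (pApply t (Rs l z)) + pApply t (pApply s (Rs l z)) with hB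
  -- membership facts for z ∈ X
  have hsRmem : ∀ z : H, z ∈ t.domain → Rs l z ∈ t.domain →
      pApply s (Rs l z) ∈ t.domain := by
    intro z hz hRz
    rw [res_sApply hRs hl z]
    exact sub_mem hz (Submodule.smul_mem _ _ hRz)
  -- t (s (Rs l z)) for z, Rs l z ∈ dom t
  have htsR : ∀ z : H, z ∈ t.domain → Rs l z ∈ t.domain →
      pApply t (pApply s (Rs l z)) = pApply t z - c • pApply t (Rs l z) := by
    intro z hz hRz
    rw [res_sApply hRs hl z, pApply_sub t hz (Submodule.smul_mem _ _ hRz),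
      pApply_smul t c hRz]
  -- the key identity on X
  have idX : ∀ x ∈ X, pApply t (Rs l x) = Rs (-l) (B x) - Rs (-l) (pApply t x) := by
    intro x hx
    have hxd : x ∈ t.domain := hXt hx
    have hm1 : Rs l x ∈ t.domain := h1 l hl x hx
    have hm2 : pApply t (Rs l x) ∈ s.domain := h2 l hl x hx
    have hinv := (hRs (-l) hl').2.2.1 (pApply t (Rs l x)) hm2
    have harg : pApply s (pApply t (Rs l x)) + (((-l : ℝ) : ℂ) * Complex.I) •
        pApply t (Rs l x) = B x - pApply t x := by
      simp only [hcneg, hB]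
      rw [htsR x hxd hm1]
      simp only [neg_smul]
      abel
    rw [harg] at hinv
    rw [← hinv, map_sub]
  -- linearity of B on X
  have hBsub : ∀ z ∈ X, ∀ w ∈ X, B (z - w) = B z - B w := by
    intro z hz w hw
    have hzd : z ∈ t.domain := hXt hz
    have hwd : w ∈ t.domain := hXt hw
    have hRz : Rs l z ∈ t.domain := h1 l hl z hz
    have hRw : Rs l w ∈ t.domain := h1 l hl w hw
    have htz : pApply t (Rs l z) ∈ s.domain := h2 l hl z hz
    have htw : pApply t (Rs l w) ∈ s.domain := h2 l hl w hw
    have hmap : Rs l (z - w) = Rs l z - Rs l w := map_sub _ _ _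
    have e1 : pApply t (Rs l (z - w)) = pApply t (Rs l z) - pApply t (Rs l w) := by
      rw [hmap, pApply_sub t hRz hRw]
    have e2 : pApply s (pApply t (Rs l (z - w))) =
        pApply s (pApply t (Rs l z)) - pApply s (pApply t (Rs l w)) := by
      rw [e1, pApply_sub s htz htw]
    have e3 : pApply s (Rs l (z - w)) = pApply s (Rs l z) - pApply s (Rs l w) := by
      rw [res_sApply hRs hl, res_sApply hRs hl, res_sApply hRs hl, hmap, smul_sub]
      abel
    have e4 : pApply t (pApply s (Rs l (z - w))) =
        pApply t (pApply s (Rs l z)) - pApply t (pApply s (Rs l w)) := by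
      rw [e3, pApply_sub t (hsRmem z hzd hRz) (hsRmem w hwd hRw)]
    simp only [hB, e2, e4]
    abel
  -- the bound on X with a nonnegative constant
  obtain ⟨C, hC⟩ := h3 l hl
  set C' : ℝ := max C 0 with hC'def
  have hC'0 : 0 ≤ C' := le_max_right _ _
  have hC' : ∀ x ∈ X, ‖B x‖ ≤ C' * ‖x‖ := fun x hx =>
    (hC x hx).trans (mul_le_mul_of_nonneg_right (le_max_left _ _) (norm_nonneg _))
  -- the main construction for each x ∈ dom t
  have key : ∀ x ∈ t.domain, Rs l x ∈ t.domain ∧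
      (pApply s (Rs l x) ∈ t.domain ∧ pApply t (Rs l x) ∈ s.domain) ∧
      ‖B x‖ ≤ C' * ‖x‖ ∧
      pApply t (Rs l x) + Rs (-l) (pApply t x) = Rs (-l) (B x) := by
    intro x hx
    -- approximating sequence
    have hseq : ∀ n : ℕ, ∃ z, z ∈ X ∧
        ‖z - x‖ + ‖pApply t z - pApply t x‖ < 1 / (n + 1) := by
      intro n
      obtain ⟨z, hz, hz'⟩ := hXcore x hx (1 / (n + 1)) (by positivity)
      exact ⟨z, hz, hz'⟩
    choose u huX hun using hseq
    have hud : ∀ n, u n ∈ t.domain := fun n => hXt (huX n)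
    have h10 : Tendsto (fun n : ℕ => 1 / ((n : ℝ) + 1)) atTop (𝓝 0) :=
      tendsto_one_div_add_atTop_nhds_zero_nat
    have hux : Tendsto u atTop (𝓝 x) := by
      rw [tendsto_iff_norm_sub_tendsto_zero]
      refine squeeze_zero (fun n => norm_nonneg _) (fun n => ?_) h10
      exact (le_add_of_nonneg_right (norm_nonneg _)).trans (hun n).le
    have hutx : Tendsto (fun n => pApply t (u n)) atTop (𝓝 (pApply t x)) := by
      rw [tendsto_iff_norm_sub_tendsto_zero]
      refine squeeze_zero (fun n => norm_nonneg _) (fun n => ?_) h10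
      exact (le_add_of_nonneg_left (norm_nonneg _)).trans (hun n).le
    -- B ∘ u is Cauchy
    have hBc : CauchySeq (fun n => B (u n)) := by
      rw [Metric.cauchySeq_iff]
      intro ε hε
      obtain ⟨N, hN⟩ := Metric.cauchySeq_iff.mp hux.cauchySeq (ε / (C' + 1))
        (by positivity)
      refine ⟨N, fun m hm n hn => ?_⟩
      have hd := hN m hm n hn
      have hlt : C' * (ε / (C' + 1)) < ε := by
        rw [mul_div_assoc', div_lt_iff₀ (by positivity : (0:ℝ) < C' + 1)]
        nlinarith
      calc dist (B (u m)) (B (u n)) = ‖B (u m) - B (u n)‖ := dist_eq_norm _ _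
        _ = ‖B (u m - u n)‖ := by rw [hBsub (u m) (huX m) (u n) (huX n)]
        _ ≤ C' * ‖u m - u n‖ := hC' _ (sub_mem (huX m) (huX n))
        _ ≤ C' * (ε / (C' + 1)) := by
            refine mul_le_mul_of_nonneg_left ?_ hC'0
            rw [← dist_eq_norm]; exact hd.le
        _ < ε := hlt
    obtain ⟨y, hy⟩ := cauchySeq_tendsto_of_complete hBc
    -- pass to the limit in the identity on X
    have htRu : ∀ n, pApply t (Rs l (u n)) = Rs (-l) (B (u n)) - Rs (-l) (pApply t (u n)) :=
      fun n => idX (u n) (huX n)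
    have htRlim : Tendsto (fun n => pApply t (Rs l (u n))) atTop
        (𝓝 (Rs (-l) y - Rs (-l) (pApply t x))) := by
      simp only [htRu]
      exact (((Rs (-l)).continuous.tendsto y).comp hy).sub
        (((Rs (-l)).continuous.tendsto _).comp hutx)
    have hRulim : Tendsto (fun n => Rs l (u n)) atTop (𝓝 (Rs l x)) :=
      ((Rs l).continuous.tendsto x).comp hux
    obtain ⟨hmem, hval⟩ := closed_of_sa ht (fun n => h1 l hl (u n) (huX n)) hRulim htRlim
    -- hmem : Rs l x ∈ t.domain, hval : pApply t (Rs l x) = Rs (-l) y - Rs (-l) (t x)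
    have hvalt : pApply t (Rs l x) = Rs (-l) (y - pApply t x) := by
      rw [hval, map_sub]
    -- memberships (b)
    have hbs : pApply t (Rs l x) ∈ s.domain := by
      rw [hvalt]; exact (hRs (-l) hl').1 _
    have hbt : pApply s (Rs l x) ∈ t.domain := hsRmem x hx hmem
    -- B x = y
    have hstR : pApply s (pApply t (Rs l x)) = (y - pApply t x) + c • pApply t (Rs l x) := by
      conv_lhs => rw [hvalt]
      rw [res_sApply hRs hl' (y - pApply t x), hcneg, neg_smul, sub_neg_eq_add, ← hvalt]
    have hBx : B x = y := by
      simp only [hB, hstR, htsR x hx hmem]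
      abel
    -- the bound
    have hbound : ‖B x‖ ≤ C' * ‖x‖ := by
      rw [hBx]
      have hn1 : Tendsto (fun n => ‖B (u n)‖) atTop (𝓝 ‖y‖) := hy.norm
      have hn2 : Tendsto (fun n => C' * ‖u n‖) atTop (𝓝 (C' * ‖x‖)) :=
        (hux.norm).const_mul C'
      exact le_of_tendsto_of_tendsto' hn1 hn2 (fun n => hC' _ (huX n))
    refine ⟨hmem, ⟨hbt, hbs⟩, hbound, ?_⟩
    rw [hBx, hval]
    abel
  exact ⟨fun x hx => (key x hx).1, fun x hx => (key x hx).2.1,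
    ⟨C', fun x hx => (key x hx).2.2.1⟩, fun x hx => (key x hx).2.2.2⟩
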